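/- Every polynomial function f on SL(3,ℂ) (i.e. the restriction to SL(3,ℂ) of a polynomial in the nine matrix entries) that is invariant under conjugation (f(gXg⁻¹) = f(X) for all g, X ∈ SL(3,ℂ)) is a polynomial with complex coefficients in the two functions X ↦ tr(X) and X ↦ tr(X⁻¹); moreover these two functions are algebraically independent over ℂ, i.e. no nonzero polynomial p ∈ ℂ[u,v] satisfies p(tr(X), tr(X⁻¹)) = 0 for all X ∈ SL(3,ℂ). -/

import Mathlib

/-- The `SL(3,ℂ)` group. -/
abbrev SL3 := Matrix.SpecialLinearGroup (Fin 3) ℂ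

/-- Trace of an element of `SL(3,ℂ)`, viewed as a `3 × 3` complex matrix. -/
noncomputable def trc (W : SL3) : ℂ := Matrix.trace (W : Matrix (Fin 3) (Fin 3) ℂ)

open Matrix Polynomial

set_option maxHeartbeats 1000000

noncomputable section InvAux

abbrev M3 := Matrix (Fin 3) (Fin 3) ℂ
abbrev MP3 := Matrix (Fin 3) (Fin 3) (Polynomial ℂ)

/-- The companion matrix of `X³ - a X² + b X - 1`. -/
def Cm (a b : ℂ) : M3 := !![0,0,1;1,0,-b;0,1,a]

lemma det_Cm (a b : ℂ) : (Cm a b).det = 1 := by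
  simp [Cm, Matrix.det_fin_three]

lemma trace_Cm (a b : ℂ) : (Cm a b).trace = a := by
  simp [Cm, Matrix.trace_fin_three]

lemma trace_adj_Cm (a b : ℂ) : (adjugate (Cm a b)).trace = b := by
  simp [Cm, Matrix.adjugate_fin_three_of, Matrix.trace_fin_three]

def CmSL (a b : ℂ) : SL3 := ⟨Cm a b, det_Cm a b⟩

lemma trc_eq (W : SL3) : trc W = (W : M3).trace := rfl

lemma trc_inv (W : SL3) : trc W⁻¹ = (adjugate (W : M3)).trace := by
  rw [trc_eq, Matrix.SpecialLinearGroup.coe_inv]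

lemma trc_CmSL (a b : ℂ) : trc (CmSL a b) = a := trace_Cm a b

lemma trc_CmSL_inv (a b : ℂ) : trc (CmSL a b)⁻¹ = b := by
  rw [trc_inv]; exact trace_adj_Cm a b

lemma part2 (p : MvPolynomial (Fin 2) ℂ)
    (h : ∀ X : SL3, MvPolynomial.eval ![trc X, trc X⁻¹] p = 0) : p = 0 := by
  apply MvPolynomial.funext (q := 0)
  intro x
  have hx : ![x 0, x 1] = x := by funext i; fin_cases i <;> rfl
  have := h (CmSL (x 0) (x 1))
  rw [trc_CmSL, trc_CmSL_inv, hx] at this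
  simpa using this

/-- `P`-matrix: columns `e₁, W e₁, W² e₁`. -/
def Pm {R : Type*} [CommRing R] (W : Matrix (Fin 3) (Fin 3) R) : Matrix (Fin 3) (Fin 3) R :=
  !![1, W 0 0, (W*W) 0 0; 0, W 1 0, (W*W) 1 0; 0, W 2 0, (W*W) 2 0]

lemma key' (a b c d e f g h i : ℂ)
    (hdet : (!![a,b,c;d,e,f;g,h,i] : M3).det = 1) :
    !![a,b,c;d,e,f;g,h,i] * Pm !![a,b,c;d,e,f;g,h,i] =
      Pm !![a,b,c;d,e,f;g,h,i] *
        Cm (trace !![a,b,c;d,e,f;g,h,i]) (trace (adjugate !![a,b,c;d,e,f;g,h,i])) := by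
  rw [Matrix.det_fin_three] at hdet
  simp at hdet
  simp only [Pm, Cm, Matrix.trace_fin_three, Matrix.adjugate_fin_three_of]
  ext x y
  fin_cases x <;> fin_cases y <;>
    simp [-mul_eq_zero, Matrix.mul_apply, Fin.sum_univ_three, Matrix.vecHead, Matrix.vecTail]
  all_goals try ring
  all_goals try linear_combination hdet

lemma key (W : M3) (hdet : W.det = 1) :
    W * Pm W = Pm W * Cm W.trace (adjugate W).trace := by
  rw [Matrix.eta_fin_three W] at hdet ⊢
  exact key' _ _ _ _ _ _ _ _ _ hdet

lemma evalPoly_aeval {σ : Type*} (p : MvPolynomial σ ℂ) (g : σ → Polynomial ℂ) (t : ℂ) :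
    (MvPolynomial.aeval g p).eval t = MvPolynomial.eval (fun s => (g s).eval t) p := by
  induction p using MvPolynomial.induction_on with
  | C a => simp [MvPolynomial.algebraMap_eq]
  | add p q hp hq => simp only [Polynomial.eval_add, _root_.map_add, hp, hq]
  | mul_X p n hp =>
      simp only [_root_.map_mul, MvPolynomial.aeval_X, MvPolynomial.eval_X,
        Polynomial.eval_mul, hp]

lemma evalMv_aeval {σ τ : Type*} (p : MvPolynomial σ ℂ) (g : σ → MvPolynomial τ ℂ)
    (x : τ → ℂ) :
    MvPolynomial.eval x (MvPolynomial.aeval g p) =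
      MvPolynomial.eval (fun s => MvPolynomial.eval x (g s)) p := by
  induction p using MvPolynomial.induction_on with
  | C a => simp [MvPolynomial.algebraMap_eq]
  | add p q hp hq => simp only [_root_.map_add, hp, hq]
  | mul_X p n hp => simp only [_root_.map_mul, MvPolynomial.aeval_X, MvPolynomial.eval_X, hp]

lemma conj_invariance (f : SL3 → ℂ) (hinv : ∀ g X : SL3, f (g * X * g⁻¹) = f X)
    (u : M3ˣ) (X Y : SL3) (hY : (Y : M3) = (u : M3) * (X : M3) * (↑u⁻¹ : M3)) :
    f Y = f X := by
  have hu : IsUnit (u : M3).det := (Matrix.isUnit_iff_isUnit_det _).mp u.isUnit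
  obtain ⟨c, hc⟩ := IsAlgClosed.exists_pow_nat_eq (k := ℂ) (u : M3).det
    (n := 3) (by norm_num)
  have hd0 : (u : M3).det ≠ 0 := hu.ne_zero
  have hc0 : c ≠ 0 := by rintro rfl; rw [← hc] at hd0; simp at hd0
  have hdet : (c⁻¹ • (u : M3)).det = 1 := by
    rw [Matrix.det_smul]
    simp only [Fintype.card_fin]
    rw [inv_pow, hc, inv_mul_cancel₀ hd0]
  set h : M3 := c⁻¹ • (u : M3) with hh
  have h1 : h * (c • (↑u⁻¹ : M3)) = 1 := by
    rw [hh, Matrix.smul_mul, Matrix.mul_smul, smul_smul, Units.mul_inv,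
      inv_mul_cancel₀ hc0, one_smul]
  have h2 : adjugate h * h = 1 := by rw [Matrix.adjugate_mul, hdet, one_smul]
  have adj : adjugate h = c • (↑u⁻¹ : M3) := by
    calc adjugate h = adjugate h * (h * (c • (↑u⁻¹ : M3))) := by rw [h1, mul_one]
    _ = adjugate h * h * (c • (↑u⁻¹ : M3)) := by rw [Matrix.mul_assoc]
    _ = c • (↑u⁻¹ : M3) := by rw [h2, one_mul]
  set hSL : SL3 := ⟨h, hdet⟩ with hhSL
  have hYX : Y = hSL * X * hSL⁻¹ := by
    apply Subtype.ext
    show (Y : M3) = _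
    rw [Matrix.SpecialLinearGroup.coe_mul, Matrix.SpecialLinearGroup.coe_mul,
      Matrix.SpecialLinearGroup.coe_inv]
    show (Y : M3) = h * (X : M3) * adjugate h
    rw [adj, hY, hh, Matrix.smul_mul, Matrix.smul_mul, Matrix.mul_smul, smul_smul,
      inv_mul_cancel₀ hc0, one_smul]
  rw [hYX]; exact hinv hSL X

lemma trans01 (c : ℂ) : (transvection 0 1 c : M3) = !![1,c,0;0,1,0;0,0,1] := by
  ext a b
  fin_cases a <;> fin_cases b <;>
    simp [Matrix.transvection, Matrix.single, Matrix.one_apply, Matrix.vecHead,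
      Matrix.vecTail]

lemma trans10 (c : ℂ) : (transvection 1 0 c : M3) = !![1,0,0;c,1,0;0,0,1] := by
  ext a b
  fin_cases a <;> fin_cases b <;>
    simp [Matrix.transvection, Matrix.single, Matrix.one_apply, Matrix.vecHead,
      Matrix.vecTail]

lemma trans12 (c : ℂ) : (transvection 1 2 c : M3) = !![1,0,0;0,1,c;0,0,1] := by
  ext a b
  fin_cases a <;> fin_cases b <;>
    simp [Matrix.transvection, Matrix.single, Matrix.one_apply, Matrix.vecHead,
      Matrix.vecTail]

lemma trans21 (c : ℂ) : (transvection 2 1 c : M3) = !![1,0,0;0,1,0;0,c,1] := by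
  ext a b
  fin_cases a <;> fin_cases b <;>
    simp [Matrix.transvection, Matrix.single, Matrix.one_apply, Matrix.vecHead,
      Matrix.vecTail]

lemma diag3 (a b c : ℂ) : (diagonal ![a,b,c] : M3) = !![a,0,0;0,b,0;0,0,c] := by
  ext i j
  fin_cases i <;> fin_cases j <;> simp [Matrix.diagonal, Matrix.vecHead, Matrix.vecTail]

lemma h01 : (0 : Fin 3) ≠ 1 := by decide
lemma h10 : (1 : Fin 3) ≠ 0 := by decide
lemma h12 : (1 : Fin 3) ≠ 2 := by decide
lemma h21 : (2 : Fin 3) ≠ 1 := by decide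

lemma H01 (a : ℂ) (ha : a ≠ 0) :
    (([⟨0,1,h01,a⟩, ⟨1,0,h10,-a⁻¹⟩, ⟨0,1,h01,a⟩, ⟨0,1,h01,-1⟩, ⟨1,0,h10,1⟩,
        ⟨0,1,h01,-1⟩] : List (TransvectionStruct (Fin 3) ℂ)).map
          TransvectionStruct.toMatrix).prod = diagonal ![a, a⁻¹, 1] := by
  simp only [List.map_cons, List.map_nil, List.prod_cons, List.prod_nil, mul_one,
    Matrix.TransvectionStruct.toMatrix_mk]
  simp only [trans01, trans10, diag3]
  simp only [Matrix.mul_fin_three]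
  norm_num
  simp [ha]

lemma H12 (a : ℂ) (ha : a ≠ 0) :
    (([⟨1,2,h12,a⟩, ⟨2,1,h21,-a⁻¹⟩, ⟨1,2,h12,a⟩, ⟨1,2,h12,-1⟩, ⟨2,1,h21,1⟩,
        ⟨1,2,h12,-1⟩] : List (TransvectionStruct (Fin 3) ℂ)).map
          TransvectionStruct.toMatrix).prod = diagonal ![1, a, a⁻¹] := by
  simp only [List.map_cons, List.map_nil, List.prod_cons, List.prod_nil, mul_one,
    Matrix.TransvectionStruct.toMatrix_mk]
  simp only [trans12, trans21, diag3]
  simp only [Matrix.mul_fin_three]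
  norm_num
  simp [ha]

lemma exists_transvec_list (S : M3) (hS : S.det = 1) :
    ∃ L : List (TransvectionStruct (Fin 3) ℂ),
      S = (L.map TransvectionStruct.toMatrix).prod := by
  obtain ⟨L, L', D, h⟩ := Matrix.Pivot.exists_list_transvec_mul_diagonal_mul_list_transvec S
  have hD : (diagonal D : M3).det = 1 := by
    have h2 := hS
    rw [h, Matrix.det_mul, Matrix.det_mul, Matrix.TransvectionStruct.det_toMatrix_prod,
      Matrix.TransvectionStruct.det_toMatrix_prod, one_mul, mul_one] at h2
    exact h2
  rw [Matrix.det_diagonal, Fin.prod_univ_three] at hD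
  have hD0 : D 0 ≠ 0 := by intro h0; rw [h0] at hD; simp at hD
  have hD1 : D 1 ≠ 0 := by intro h0; rw [h0] at hD; simp at hD
  have hD01 : D 0 * D 1 ≠ 0 := mul_ne_zero hD0 hD1
  have hD2 : D 2 = (D 0 * D 1)⁻¹ := by
    field_simp
    linear_combination hD
  have hDfun : D = fun i => (![D 0, (D 0)⁻¹, 1] i) * (![1, D 0 * D 1, (D 0 * D 1)⁻¹] i) := by
    funext i
    fin_cases i
    · simp
    · simp [Matrix.vecHead, Matrix.vecTail]
      field_simp
    · simp [Matrix.vecHead, Matrix.vecTail]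
      rw [hD2, mul_inv]
      ring
  have hdiag : (diagonal D : M3) =
      diagonal ![D 0, (D 0)⁻¹, 1] * diagonal ![1, D 0 * D 1, (D 0 * D 1)⁻¹] := by
    rw [Matrix.diagonal_mul_diagonal, ← hDfun]
  refine ⟨L ++ (([⟨0,1,h01,D 0⟩, ⟨1,0,h10,-(D 0)⁻¹⟩, ⟨0,1,h01,D 0⟩, ⟨0,1,h01,-1⟩,
      ⟨1,0,h10,1⟩, ⟨0,1,h01,-1⟩] ++ ([⟨1,2,h12,D 0 * D 1⟩, ⟨2,1,h21,-(D 0 * D 1)⁻¹⟩,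
      ⟨1,2,h12,D 0 * D 1⟩, ⟨1,2,h12,-1⟩, ⟨2,1,h21,1⟩, ⟨1,2,h12,-1⟩] ++ L'))), ?_⟩
  simp only [List.map_append, List.prod_append]
  rw [H01 (D 0) hD0, H12 (D 0 * D 1) hD01, h, hdiag]
  simp only [Matrix.mul_assoc]

def scaleTS (t : ℂ) (T : TransvectionStruct (Fin 3) ℂ) : TransvectionStruct (Fin 3) ℂ :=
  ⟨T.i, T.j, T.hij, T.c * t⟩

def polyTS (T : TransvectionStruct (Fin 3) ℂ) : MP3 :=
  transvection T.i T.j (Polynomial.C T.c * Polynomial.X)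

lemma transvection_map {R S : Type*} [CommRing R] [CommRing S] (φ : R →+* S)
    (i j : Fin 3) (c : R) :
    (transvection i j c).map φ = transvection i j (φ c) := by
  ext a b
  simp [Matrix.transvection, Matrix.single, Matrix.one_apply, Matrix.map_apply,
    apply_ite φ]

lemma polyTS_map (T : TransvectionStruct (Fin 3) ℂ) (t : ℂ) :
    (polyTS T).map (evalRingHom t) = (scaleTS t T).toMatrix := by
  rw [polyTS, transvection_map]
  simp [scaleTS]

lemma prod_polyTS_map (L : List (TransvectionStruct (Fin 3) ℂ)) (t : ℂ) :
    ((L.map polyTS).prod).map (evalRingHom t) =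
      ((L.map (scaleTS t)).map TransvectionStruct.toMatrix).prod := by
  induction L with
  | nil =>
      simp only [List.map_nil, List.prod_nil]
      ext a b
      simp [Matrix.map_apply, Matrix.one_apply, apply_ite (eval t)]
  | cons T L ih =>
      simp only [List.map_cons, List.prod_cons, Matrix.map_mul, ih, polyTS_map]

lemma scaleTS_one (T : TransvectionStruct (Fin 3) ℂ) : scaleTS 1 T = T := by
  cases T; simp [scaleTS]

lemma prod_scale_zero (L : List (TransvectionStruct (Fin 3) ℂ)) :
    ((L.map (scaleTS 0)).map TransvectionStruct.toMatrix).prod = 1 := by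
  apply List.prod_eq_one
  intro x hx
  simp only [List.map_map, List.mem_map] at hx
  obtain ⟨T, _, rfl⟩ := hx
  simp [scaleTS, Function.comp]

lemma trace_map3 {R S : Type*} [CommRing R] [CommRing S] (φ : R →+* S)
    (A : Matrix (Fin 3) (Fin 3) R) : (A.map φ).trace = φ A.trace := by
  simp [Matrix.trace_fin_three, Matrix.map_apply]

lemma Pm_map {R S : Type*} [CommRing R] [CommRing S] (φ : R →+* S)
    (A : Matrix (Fin 3) (Fin 3) R) : (Pm A).map φ = Pm (A.map φ) := by
  ext i j
  fin_cases i <;> fin_cases j <;>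
    simp [Pm, Matrix.map_apply, Matrix.mul_apply, Fin.sum_univ_three, Matrix.vecHead,
      Matrix.vecTail, map_add, _root_.map_mul]

lemma part1 (f : SL3 → ℂ) (p : MvPolynomial (Fin 3 × Fin 3) ℂ)
    (hp : ∀ X : SL3, f X = MvPolynomial.eval (fun ij => (X : M3) ij.1 ij.2) p)
    (hinv : ∀ g X : SL3, f (g * X * g⁻¹) = f X) :
    ∃ q : MvPolynomial (Fin 2) ℂ,
      ∀ X : SL3, f X = MvPolynomial.eval ![trc X, trc X⁻¹] q := by
  classical
  set G : Fin 3 × Fin 3 → MvPolynomial (Fin 2) ℂ := fun ij =>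
    if ij = (2, 2) then MvPolynomial.X 0
    else if ij = (1, 2) then - MvPolynomial.X 1
    else MvPolynomial.C (Cm 0 0 ij.1 ij.2) with hG
  set q : MvPolynomial (Fin 2) ℂ := MvPolynomial.aeval G p with hqdef
  have hq : ∀ a b : ℂ,
      MvPolynomial.eval ![a, b] q = MvPolynomial.eval (fun ij => Cm a b ij.1 ij.2) p := by
    intro a b
    rw [hqdef, evalMv_aeval]
    have hfun : (fun s => MvPolynomial.eval ![a, b] (G s)) =
        (fun ij : Fin 3 × Fin 3 => Cm a b ij.1 ij.2) := by
      funext ij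
      obtain ⟨i, j⟩ := ij
      fin_cases i <;> fin_cases j <;>
        simp [hG, Cm, Prod.ext_iff, Fin.ext_iff, Matrix.vecHead, Matrix.vecTail]
    rw [hfun]
  have hCm : ∀ a b : ℂ, f (CmSL a b) = MvPolynomial.eval ![a, b] q := by
    intro a b
    rw [hp (CmSL a b), hq a b]
    rfl
  refine ⟨q, fun X => ?_⟩
  obtain ⟨L, hL⟩ := exists_transvec_list ((X⁻¹ * CmSL 0 0 : SL3) : M3) (X⁻¹ * CmSL 0 0).2
  have hdet_t : ∀ t : ℂ,
      ((X : M3) * ((L.map (scaleTS t)).map TransvectionStruct.toMatrix).prod).det = 1 := by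
    intro t
    rw [Matrix.det_mul, X.2, Matrix.TransvectionStruct.det_toMatrix_prod, one_mul]
  set XS : ℂ → SL3 := fun t => ⟨_, hdet_t t⟩ with hXS
  set Y : MP3 := ((X : M3).map Polynomial.C) * (L.map polyTS).prod with hYdef
  have hY : ∀ t : ℂ, Y.map (evalRingHom t) = (XS t : M3) := by
    intro t
    rw [hYdef, Matrix.map_mul, prod_polyTS_map]
    show _ * _ = (X : M3) * _
    congr 1
    ext a b
    simp [Matrix.map_apply]
  set Apoly : Polynomial ℂ := MvPolynomial.aeval (fun ij => Y ij.1 ij.2) p with hAdef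
  have hA : ∀ t : ℂ, Apoly.eval t = f (XS t) := by
    intro t
    rw [hAdef, evalPoly_aeval, hp (XS t)]
    have hfun : (fun s : Fin 3 × Fin 3 => (Y s.1 s.2).eval t) =
        (fun ij : Fin 3 × Fin 3 => (XS t : M3) ij.1 ij.2) := by
      funext ij
      rw [← hY t]
      rfl
    rw [hfun]
  set Bpoly : Polynomial ℂ :=
    MvPolynomial.aeval ![Y.trace, (adjugate Y).trace] q with hBdef
  have htr : ∀ t : ℂ, Y.trace.eval t = trc (XS t) := by
    intro t
    rw [trc_eq, ← hY t, trace_map3]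
    rfl
  have htadj : ∀ t : ℂ, (adjugate Y).trace.eval t = trc (XS t)⁻¹ := by
    intro t
    rw [trc_inv, ← hY t]
    rw [← RingHom.mapMatrix_apply, ← RingHom.map_adjugate, RingHom.mapMatrix_apply, trace_map3]
    rfl
  have hB : ∀ t : ℂ, Bpoly.eval t = MvPolynomial.eval ![trc (XS t), trc (XS t)⁻¹] q := by
    intro t
    rw [hBdef, evalPoly_aeval]
    have hfun : (fun s : Fin 2 => ((![Y.trace, (adjugate Y).trace] : Fin 2 → Polynomial ℂ) s).eval t) =
        ![trc (XS t), trc (XS t)⁻¹] := by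
      funext s
      fin_cases s
      · simpa using htr t
      · simpa using htadj t
    rw [hfun]
  set dPoly : Polynomial ℂ := (Pm Y).det with hddef
  have hd : ∀ t : ℂ, dPoly.eval t = (Pm (XS t : M3)).det := by
    intro t
    rw [hddef, ← hY t, ← Pm_map]
    rw [← RingHom.mapMatrix_apply, ← RingHom.map_det]
    rfl
  have hAB : ∀ t : ℂ, (Apoly - Bpoly).eval t * dPoly.eval t = 0 := by
    intro t
    rcases eq_or_ne (dPoly.eval t) 0 with h0 | h0
    · rw [h0, mul_zero]
    rw [hd t] at h0
    have hu : IsUnit (Pm (XS t : M3)) :=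
      (Matrix.isUnit_iff_isUnit_det _).mpr (isUnit_iff_ne_zero.mpr h0)
    obtain ⟨u, hu'⟩ := hu
    have hkey := key (XS t : M3) (XS t).2
    rw [← hu'] at hkey
    have hconj : (XS t : M3) =
        (u : M3) * Cm (XS t : M3).trace (adjugate (XS t : M3)).trace * (↑u⁻¹ : M3) := by
      calc (XS t : M3) = ((XS t : M3) * (u : M3)) * (↑u⁻¹ : M3) := by
            rw [mul_assoc, Units.mul_inv, mul_one]
        _ = _ := by rw [hkey]
    have hfeq : f (XS t) = f (CmSL (XS t : M3).trace (adjugate (XS t : M3)).trace) :=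
      conj_invariance f hinv u _ _ hconj
    have heq : Apoly.eval t = Bpoly.eval t := by
      rw [hA t, hB t, hfeq, hCm]
      rw [show (XS t : M3).trace = trc (XS t) from rfl, ← trc_inv]
    rw [Polynomial.eval_sub, heq, sub_self, zero_mul]
  have hprod : (Apoly - Bpoly) * dPoly = 0 := by
    apply Polynomial.funext
    intro r
    rw [Polynomial.eval_mul, hAB r, Polynomial.eval_zero]
  have hmapL1 : L.map (scaleTS 1) = L := by
    have : ∀ T ∈ L, scaleTS 1 T = T := fun T _ => scaleTS_one T
    rw [List.map_congr_left this]
    simp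
  have hXS1 : (XS 1 : M3) = Cm 0 0 := by
    show (X : M3) * _ = _
    rw [hmapL1, ← hL]
    rw [Matrix.SpecialLinearGroup.coe_mul, Matrix.SpecialLinearGroup.coe_inv]
    rw [← Matrix.mul_assoc, Matrix.mul_adjugate, X.2, one_smul, Matrix.one_mul]
    rfl
  have hPmC : Pm (Cm 0 0) = (1 : M3) := by
    ext i j
    fin_cases i <;> fin_cases j <;>
      simp [Pm, Cm, Matrix.mul_apply, Fin.sum_univ_three, Matrix.one_apply, Matrix.vecHead,
        Matrix.vecTail]
  have hd1 : dPoly ≠ 0 := by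
    intro h0
    have h1 := hd 1
    rw [h0, Polynomial.eval_zero, hXS1, hPmC, Matrix.det_one] at h1
    exact zero_ne_one h1
  have hAB0 : Apoly = Bpoly := by
    rcases mul_eq_zero.mp hprod with h | h
    · exact sub_eq_zero.mp h
    · exact absurd h hd1
  have hXS0 : XS 0 = X := by
    apply Subtype.ext
    show (X : M3) * _ = (X : M3)
    rw [prod_scale_zero, Matrix.mul_one]
  have hfinal := hA 0
  rw [hAB0, hB 0, hXS0] at hfinal
  exact hfinal.symm

end InvAux

/-- Every conjugation-invariant polynomial function on `SL(3,ℂ)` is a polynomial in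
`tr X` and `tr X⁻¹`; moreover the two functions `tr X` and `tr X⁻¹` are algebraically
independent over `ℂ`. -/
theorem invariant_functions_SL3_rank_one :
    (∀ f : SL3 → ℂ,
      (∃ p : MvPolynomial (Fin 3 × Fin 3) ℂ,
        ∀ X : SL3, f X = MvPolynomial.eval
          (fun ij => (X : Matrix (Fin 3) (Fin 3) ℂ) ij.1 ij.2) p) →
      (∀ (g X : SL3), f (g * X * g⁻¹) = f X) →
      ∃ q : MvPolynomial (Fin 2) ℂ,
        ∀ X : SL3, f X = MvPolynomial.eval ![trc X, trc X⁻¹] q) ∧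
    (∀ p : MvPolynomial (Fin 2) ℂ,
      (∀ X : SL3, MvPolynomial.eval ![trc X, trc X⁻¹] p = 0) → p = 0) := by
  constructor
  · rintro f ⟨p, hp⟩ hinv
    exact part1 f p hp hinv
  · exact part2
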